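/- Let 0 ≤ a < b, let s ∈ (0,1], let q > 1 with conjugate exponent p = q/(q−1), and let f : ℝ → ℝ be differentiable on an open interval containing [a, b] with f' integrable on [a, b]. Suppose |f'|^q is s-convex in the second sense on [a, b], i.e. for all x, y ∈ [a, b] and t ∈ [0,1], |f'(t·x + (1−t)·y)|^q ≤ t^s |f'(x)|^q + (1−t)^s |f'(y)|^q. Let D = {a = x₀ < x₁ < … < x_n = b} be any partition of [a, b], let S(f,D) = Σ_{k=0}^{n−1} ((f(x_k)+f(x_{k+1}))/2)(x_{k+1} − x_k) be the trapezoidal sum, and R(f,D) = ∫_a^b f(x) dx − S(f,D) the error. Then |R(f,D)| ≤ (2/3)^{1/p} · ( (s² + 3s + 4) / ((s+1)(s+2)(s+3)) )^{1/q} · Σ_{k=0}^{n−1} ((x_{k+1} − x_k)²/2) ( |f'(x_k)| + |f'(x_{k+1})| ). -/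

import Mathlib

open MeasureTheory intervalIntegral


lemma polyInt (α β A B C : ℝ) :
    ∫ y in α..β, (A + B*y + C*y^2) = A*(β-α) + B*(β^2-α^2)/2 + C*(β^3-α^3)/3 := by
  have h1 : IntervalIntegrable (fun y => A + B*y) volume α β := by
    apply Continuous.intervalIntegrable; continuity
  have h2 : IntervalIntegrable (fun y : ℝ => C*y^2) volume α β := by
    apply Continuous.intervalIntegrable; continuity
  have h3 : IntervalIntegrable (fun _ : ℝ => A) volume α β := intervalIntegrable_const
  have h4 : IntervalIntegrable (fun y : ℝ => B*y) volume α β := by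
    apply Continuous.intervalIntegrable; continuity
  rw [intervalIntegral.integral_add h1 h2, intervalIntegral.integral_add h3 h4,
    intervalIntegral.integral_const, intervalIntegral.integral_const_mul,
    intervalIntegral.integral_const_mul, integral_id, integral_pow]
  push_cast
  simp only [smul_eq_mul]
  ring

lemma absLinInt (α β c₁ c₂ : ℝ) (h : α ≤ β) :
    ∫ y in α..β, |y - (α+β)/2| * (c₁ + c₂*y)
      = (β-α)^2/4 * (c₁ + c₂*((α+β)/2)) := by
  set m := (α+β)/2 with hm
  have hαm : α ≤ m := by rw [hm]; linarith
  have hmβ : m ≤ β := by rw [hm]; linarith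
  have i1 : IntervalIntegrable (fun y => |y - m| * (c₁ + c₂*y)) volume α m := by
    apply Continuous.intervalIntegrable; continuity
  have i2 : IntervalIntegrable (fun y => |y - m| * (c₁ + c₂*y)) volume m β := by
    apply Continuous.intervalIntegrable; continuity
  rw [← intervalIntegral.integral_add_adjacent_intervals i1 i2]
  have e1 : (∫ y in α..m, |y - m| * (c₁ + c₂*y))
      = ∫ y in α..m, ((m*c₁) + (m*c₂ - c₁)*y + (-c₂)*y^2) := by
    apply intervalIntegral.integral_congr
    intro y hy
    rw [Set.uIcc_of_le hαm] at hy
    have hy2 : |y - m| = m - y := by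
      rw [abs_of_nonpos (by linarith [hy.2])]; ring
    simp only []; rw [hy2]; ring
  have e2 : (∫ y in m..β, |y - m| * (c₁ + c₂*y))
      = ∫ y in m..β, ((-(m*c₁)) + (c₁ - m*c₂)*y + c₂*y^2) := by
    apply intervalIntegral.integral_congr
    intro y hy
    rw [Set.uIcc_of_le hmβ] at hy
    have hy2 : |y - m| = y - m := abs_of_nonneg (by linarith [hy.1])
    simp only []; rw [hy2]; ring
  rw [e1, e2, polyInt, polyInt, hm]
  ring

lemma add_rpow_le' {x y q : ℝ} (hx : 0 ≤ x) (hy : 0 ≤ y) (hq : 1 ≤ q) :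
    x ^ q + y ^ q ≤ (x + y) ^ q := by
  have := NNReal.add_rpow_le_rpow_add ⟨x, hx⟩ ⟨y, hy⟩ hq
  have h2 : ((⟨x, hx⟩ : NNReal) + ⟨y, hy⟩) = (⟨x + y, by positivity⟩ : NNReal) := rfl
  exact Real.add_rpow_le_rpow_add hx hy hq

set_option maxHeartbeats 1000000 in
lemma keyIneq (f f' : ℝ → ℝ) (s p q α β : ℝ)
    (hs0 : 0 < s) (hs1 : s ≤ 1) (hpq : p.HolderConjugate q)
    (hαβ : α < β)
    (hderiv : ∀ y ∈ Set.Icc α β, HasDerivAt f (f' y) y)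
    (hint : IntervalIntegrable f' volume α β)
    (hconv : ∀ t ∈ Set.Icc (0:ℝ) 1,
      |f' (t * α + (1 - t) * β)| ^ q ≤ t ^ s * |f' α| ^ q + (1 - t) ^ s * |f' β| ^ q) :
    |(∫ y in α..β, f y) - ((f α + f β) / 2) * (β - α)| ≤
      (2/3) ^ (1/p) * ((s^2 + 3*s + 4) / ((s+1)*(s+2)*(s+3))) ^ (1/q) *
        ((β - α)^2 / 2) * (|f' α| + |f' β|) := by
  have hp1 : 1 < p := hpq.lt
  have hq1 : 1 < q := hpq.symm.lt
  have hp0 : 0 < p := by linarith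
  have hq0 : 0 < q := by linarith
  have huv : 1/p + 1/q = 1 := by
    have := hpq.inv_add_inv_eq_one; rw [inv_eq_one_div, inv_eq_one_div] at this; exact this
  have hu0 : 0 < 1/p := by positivity
  have hv0 : 0 < 1/q := by positivity
  set m : ℝ := (α + β)/2 with hm
  set A : ℝ := |f' α| ^ q with hA
  set B : ℝ := |f' β| ^ q with hB
  have hA0 : 0 ≤ A := Real.rpow_nonneg (abs_nonneg _) q
  have hB0 : 0 ≤ B := Real.rpow_nonneg (abs_nonneg _) q
  have hh0 : (0:ℝ) < β - α := by linarith
  -- pointwise s-convexity consequence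
  have hpt : ∀ y ∈ Set.Icc α β,
      |f' y| ^ q ≤ ((β - y)/(β - α)) ^ s * A + ((y - α)/(β - α)) ^ s * B := by
    intro y hy
    set t : ℝ := (β - y)/(β - α) with hT
    have ht0 : 0 ≤ t := by
      apply div_nonneg _ hh0.le; linarith [hy.2]
    have ht1 : t ≤ 1 := by
      rw [div_le_one hh0]; linarith [hy.1]
    have h1t : 1 - t = (y - α)/(β - α) := by
      field_simp [hT]
      rw [hT]; field_simp; ring
    have hyt : t * α + (1 - t) * β = y := by
      rw [h1t, hT]; field_simp; ring
    have := hconv t ⟨ht0, ht1⟩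
    rw [hyt] at this
    rw [← h1t]
    exact this
  -- crude bound |f' y|^q ≤ A + B
  have hcrude : ∀ y ∈ Set.Icc α β, |f' y| ^ q ≤ A + B := by
    intro y hy
    refine (hpt y hy).trans ?_
    have ht0 : 0 ≤ (β - y)/(β - α) := div_nonneg (by linarith [hy.2]) hh0.le
    have ht1 : (β - y)/(β - α) ≤ 1 := by rw [div_le_one hh0]; linarith [hy.1]
    have e1 : ((β - y)/(β - α)) ^ s ≤ 1 := Real.rpow_le_one ht0 ht1 hs0.le
    have ht0' : 0 ≤ (y - α)/(β - α) := div_nonneg (by linarith [hy.1]) hh0.le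
    have ht1' : (y - α)/(β - α) ≤ 1 := by rw [div_le_one hh0]; linarith [hy.2]
    have e2 : ((y - α)/(β - α)) ^ s ≤ 1 := Real.rpow_le_one ht0' ht1' hs0.le
    nlinarith [mul_le_of_le_one_left hA0 e1, mul_le_of_le_one_left hB0 e2]
  -- linear bound via tangent line t^s ≤ s*t + (1-s)
  set c₁ : ℝ := (1-s)*(A+B) + s/(β-α)*(A*β - B*α) with hc₁
  set c₂ : ℝ := s*(B-A)/(β-α) with hc₂
  have hlin : ∀ y ∈ Set.Icc α β, |f' y| ^ q ≤ c₁ + c₂ * y := by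
    intro y hy
    refine (hpt y hy).trans ?_
    have ht0 : 0 ≤ (β - y)/(β - α) := div_nonneg (by linarith [hy.2]) hh0.le
    have ht0' : 0 ≤ (y - α)/(β - α) := div_nonneg (by linarith [hy.1]) hh0.le
    have e1 : ((β - y)/(β - α)) ^ s ≤ s * ((β - y)/(β - α)) + (1-s) := by
      have := Real.geom_mean_le_arith_mean2_weighted hs0.le (by linarith : (0:ℝ) ≤ 1-s)
        ht0 zero_le_one (by ring)
      simpa using this
    have e2 : ((y - α)/(β - α)) ^ s ≤ s * ((y - α)/(β - α)) + (1-s) := by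
      have := Real.geom_mean_le_arith_mean2_weighted hs0.le (by linarith : (0:ℝ) ≤ 1-s)
        ht0' zero_le_one (by ring)
      simpa using this
    have step : ((β - y)/(β - α)) ^ s * A + ((y - α)/(β - α)) ^ s * B
        ≤ (s * ((β - y)/(β - α)) + (1-s)) * A + (s * ((y - α)/(β - α)) + (1-s)) * B := by
      gcongr
    refine step.trans (le_of_eq ?_)
    rw [hc₁, hc₂]
    field_simp
    ring
  -- Step A : integration by parts identity
  have hfd : ∀ y ∈ Set.uIcc α β, HasDerivAt f (f' y) y := by
    rw [Set.uIcc_of_le hαβ.le]; exact hderiv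
  have hud : ∀ y ∈ Set.uIcc α β, HasDerivAt (fun z => z - m) (1:ℝ) y :=
    fun y _ => (hasDerivAt_id y).sub_const m
  have ibp := intervalIntegral.integral_mul_deriv_eq_deriv_mul hud hfd
    intervalIntegrable_const hint
  simp only [one_mul] at ibp
  have keyid : (∫ y in α..β, f y) - ((f α + f β)/2) * (β - α)
      = -∫ y in α..β, (y - m) * f' y := by
    rw [ibp, hm]; ring
  rw [keyid, abs_neg]
  -- Step B : to set integrals over μ
  set μ : Measure ℝ := volume.restrict (Set.Ioc α β) with hμ
  haveI : IsFiniteMeasure μ := ⟨by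
    rw [hμ, Measure.restrict_apply_univ]; exact measure_Ioc_lt_top⟩
  have hmeasf' : AEStronglyMeasurable f' μ := hint.1.aestronglyMeasurable
  have habsf' : AEStronglyMeasurable (fun y => |f' y|) μ := by
    simpa [Real.norm_eq_abs] using hmeasf'.norm
  have hIoc : (∫ y in α..β, (y - m) * f' y) = ∫ y, (y - m) * f' y ∂μ := by
    rw [intervalIntegral.integral_of_le hαβ.le]
  -- membership bounds
  have hmem : ∀ᵐ y ∂μ, y ∈ Set.Icc α β := by
    filter_upwards [ae_restrict_mem measurableSet_Ioc] with y hy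
    exact Set.Ioc_subset_Icc_self hy
  have habsm : ∀ y ∈ Set.Icc α β, |y - m| ≤ β - α := by
    intro y hy
    rw [abs_le]; constructor <;> simp only [hm] <;> linarith [hy.1, hy.2]
  -- Step B2 : abs into integral of abs
  have step1 : |∫ y, (y - m) * f' y ∂μ| ≤ ∫ y, |y - m| * |f' y| ∂μ := by
    simpa [Real.norm_eq_abs, abs_mul] using
      MeasureTheory.norm_integral_le_integral_norm (μ := μ) (f := fun y => (y - m) * f' y)
  set F := fun y : ℝ => |y - m| ^ (1/p) with hF
  set G := fun y : ℝ => |y - m| ^ (1/q) * |f' y| with hG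
  have hFcont : Continuous F :=
    ((continuous_id.sub continuous_const).abs).rpow_const (fun x => Or.inr hu0.le)
  have hGmeas : AEStronglyMeasurable G μ :=
    (Continuous.aestronglyMeasurable
      (((continuous_id.sub continuous_const).abs).rpow_const (fun x => Or.inr hv0.le))).mul habsf'
  have hf'bd : ∀ y ∈ Set.Icc α β, |f' y| ≤ (A+B) ^ (1/q) := by
    intro y hy
    have h1 : (|f' y| ^ q) ^ (1/q) ≤ (A+B) ^ (1/q) :=
      Real.rpow_le_rpow (Real.rpow_nonneg (abs_nonneg _) _) (hcrude y hy) hv0.le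
    rwa [← Real.rpow_mul (abs_nonneg _), mul_one_div_cancel hq0.ne', Real.rpow_one] at h1
  have hFmem : MemLp F (ENNReal.ofReal p) μ := by
    refine MemLp.of_bound hFcont.aestronglyMeasurable ((β-α) ^ (1/p)) ?_
    filter_upwards [hmem] with y hy
    rw [Real.norm_eq_abs, abs_of_nonneg (Real.rpow_nonneg (abs_nonneg _) _)]
    exact Real.rpow_le_rpow (abs_nonneg _) (habsm y hy) hu0.le
  have hGmem : MemLp G (ENNReal.ofReal q) μ := by
    refine MemLp.of_bound hGmeas ((β-α) ^ (1/q) * (A+B) ^ (1/q)) ?_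
    filter_upwards [hmem] with y hy
    rw [Real.norm_eq_abs, hG]
    rw [abs_of_nonneg (mul_nonneg (Real.rpow_nonneg (abs_nonneg _) _) (abs_nonneg _))]
    exact mul_le_mul (Real.rpow_le_rpow (abs_nonneg _) (habsm y hy) hv0.le) (hf'bd y hy)
      (abs_nonneg _) (Real.rpow_nonneg hh0.le _)
  have hFnn : 0 ≤ᵐ[μ] F :=
    Filter.Eventually.of_forall fun y => Real.rpow_nonneg (abs_nonneg _) _
  have hGnn : 0 ≤ᵐ[μ] G :=
    Filter.Eventually.of_forall fun y =>
      mul_nonneg (Real.rpow_nonneg (abs_nonneg _) _) (abs_nonneg _)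
  have holder := integral_mul_le_Lp_mul_Lq_of_nonneg hpq hFnn hGnn hFmem hGmem
  have hFGeq : ∫ y, |y - m| * |f' y| ∂μ = ∫ y, F y * G y ∂μ := by
    refine integral_congr_ae (Filter.Eventually.of_forall fun y => ?_)
    simp only [hF, hG]
    rw [← mul_assoc, ← Real.rpow_add' (abs_nonneg _) (by rw [huv]; norm_num), huv,
      Real.rpow_one]
  have eFp : ∫ y, F y ^ p ∂μ = ∫ y, |y - m| ∂μ := by
    refine integral_congr_ae (Filter.Eventually.of_forall fun y => ?_)
    simp only [hF]
    rw [← Real.rpow_mul (abs_nonneg _), one_div_mul_cancel hp0.ne', Real.rpow_one]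
  have eGq : ∫ y, G y ^ q ∂μ = ∫ y, |y - m| * |f' y| ^ q ∂μ := by
    refine integral_congr_ae (Filter.Eventually.of_forall fun y => ?_)
    simp only [hG]
    rw [Real.mul_rpow (Real.rpow_nonneg (abs_nonneg _) _) (abs_nonneg _),
      ← Real.rpow_mul (abs_nonneg _), one_div_mul_cancel hq0.ne', Real.rpow_one]
  have c1 : ∫ y, |y - m| ∂μ = (β-α)^2/4 := by
    have h0 := absLinInt α β 1 0 hαβ.le
    rw [intervalIntegral.integral_of_le hαβ.le] at h0
    simp only [zero_mul, add_zero, mul_one, mul_zero] at h0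
    exact h0
  have hIntL : Integrable (fun y => |y - m| * |f' y| ^ q) μ := by
    have meas : AEStronglyMeasurable (fun y => |y - m| * |f' y| ^ q) μ :=
      (((continuous_id.sub continuous_const).abs).aestronglyMeasurable).mul
        ((Real.continuous_rpow_const hq0.le).comp_aestronglyMeasurable habsf')
    refine memLp_one_iff_integrable.mp (MemLp.of_bound meas ((β-α) * (A+B)) ?_)
    filter_upwards [hmem] with y hy
    rw [Real.norm_eq_abs,
      abs_of_nonneg (mul_nonneg (abs_nonneg _) (Real.rpow_nonneg (abs_nonneg _) _))]
    exact mul_le_mul (habsm y hy) (hcrude y hy) (Real.rpow_nonneg (abs_nonneg _) _) hh0.le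
  have hIntR : Integrable (fun y => |y - m| * (c₁ + c₂ * y)) μ := by
    rw [hμ]
    apply Continuous.integrableOn_Ioc
    exact (((continuous_id.sub continuous_const).abs).mul
      (continuous_const.add (continuous_const.mul continuous_id)))
  have hmono : ∫ y, |y - m| * |f' y| ^ q ∂μ ≤ ∫ y, |y - m| * (c₁ + c₂ * y) ∂μ := by
    refine integral_mono_ae hIntL hIntR ?_
    filter_upwards [hmem] with y hy
    exact mul_le_mul_of_nonneg_left (hlin y hy) (abs_nonneg _)
  have c2 : ∫ y, |y - m| * (c₁ + c₂ * y) ∂μ = (β-α)^2*(2-s)/8*(A+B) := by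
    have h0 := absLinInt α β c₁ c₂ hαβ.le
    rw [intervalIntegral.integral_of_le hαβ.le] at h0
    rw [hμ]
    simp only [hm]
    rw [h0, hc₁, hc₂]
    field_simp
    ring
  have hGq0 : 0 ≤ ∫ y, G y ^ q ∂μ :=
    integral_nonneg fun y =>
      Real.rpow_nonneg (mul_nonneg (Real.rpow_nonneg (abs_nonneg _) _) (abs_nonneg _)) q
  have main : |∫ y, (y - m) * f' y ∂μ| ≤
      ((β-α)^2/4) ^ (1/p) * ((β-α)^2*(2-s)/8*(A+B)) ^ (1/q) := by
    have h1 : (∫ y, G y ^ q ∂μ) ^ (1/q) ≤ ((β-α)^2*(2-s)/8*(A+B)) ^ (1/q) := by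
      refine Real.rpow_le_rpow hGq0 ?_ hv0.le
      rw [eGq]
      exact hmono.trans_eq c2
    calc |∫ y, (y - m) * f' y ∂μ| ≤ ∫ y, |y - m| * |f' y| ∂μ := step1
      _ = ∫ y, F y * G y ∂μ := hFGeq
      _ ≤ (∫ y, F y ^ p ∂μ) ^ (1/p) * (∫ y, G y ^ q ∂μ) ^ (1/q) := holder
      _ = ((β-α)^2/4) ^ (1/p) * (∫ y, G y ^ q ∂μ) ^ (1/q) := by rw [eFp, c1]
      _ ≤ ((β-α)^2/4) ^ (1/p) * ((β-α)^2*(2-s)/8*(A+B)) ^ (1/q) := by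
          exact mul_le_mul_of_nonneg_left h1 (Real.rpow_nonneg (by positivity) _)
  -- final numeric estimate
  set M : ℝ := (s^2 + 3*s + 4) / ((s+1)*(s+2)*(s+3)) with hM
  have hM0 : 0 < M := by
    rw [hM]; apply div_pos <;> nlinarith
  have hSnn : (0:ℝ) ≤ |f' α| + |f' β| := by positivity
  have hABle : (A+B) ^ (1/q) ≤ |f' α| + |f' β| := by
    have h1 : A + B ≤ (|f' α| + |f' β|) ^ q :=
      add_rpow_le' (abs_nonneg _) (abs_nonneg _) hq1.le
    have h2 : (A+B) ^ (1/q) ≤ ((|f' α| + |f' β|) ^ q) ^ (1/q) :=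
      Real.rpow_le_rpow (by positivity) h1 hv0.le
    rwa [← Real.rpow_mul hSnn, mul_one_div_cancel hq0.ne', Real.rpow_one] at h2
  have h2s : (0:ℝ) ≤ (2-s)/8 := div_nonneg (by linarith) (by norm_num)
  have hfrac : (2-s)/8 ≤ M/2 := by
    rw [hM, div_div, div_le_div_iff₀ (by norm_num) (by positivity)]
    nlinarith [pow_nonneg hs0.le 3, pow_nonneg hs0.le 4, sq_nonneg s, hs1, hs0]
  have split1 : ((β-α)^2/4 : ℝ) ^ (1/p) = ((β-α)^2) ^ (1/p) * (1/4 : ℝ) ^ (1/p) := by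
    rw [← Real.mul_rpow (by positivity) (by norm_num)]
    congr 1
    ring
  have split2 : ((β-α)^2*(2-s)/8*(A+B)) ^ (1/q)
      = ((β-α)^2) ^ (1/q) * ((2-s)/8) ^ (1/q) * (A+B) ^ (1/q) := by
    rw [show (β-α)^2*(2-s)/8*(A+B) = ((β-α)^2) * ((2-s)/8) * (A+B) by ring,
      Real.mul_rpow (by positivity) (by positivity),
      Real.mul_rpow (by positivity) h2s]
  have hpow1 : ((β-α)^2 : ℝ) ^ (1/p) * ((β-α)^2 : ℝ) ^ (1/q) = (β-α)^2 := by
    rw [← Real.rpow_add (by positivity), huv, Real.rpow_one]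
  have final : ((β-α)^2/4) ^ (1/p) * ((β-α)^2*(2-s)/8*(A+B)) ^ (1/q)
      ≤ (2/3) ^ (1/p) * M ^ (1/q) * ((β - α)^2 / 2) * (|f' α| + |f' β|) := by
    rw [split1, split2]
    have e0 : ((β-α)^2) ^ (1/p) * (1/4 : ℝ) ^ (1/p)
        * (((β-α)^2) ^ (1/q) * ((2-s)/8) ^ (1/q) * (A+B) ^ (1/q))
        = (((β-α)^2) ^ (1/p) * ((β-α)^2) ^ (1/q))
          * ((1/4 : ℝ) ^ (1/p) * (((2-s)/8) ^ (1/q) * (A+B) ^ (1/q))) := by ring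
    rw [e0, hpow1]
    have i1 : (1/4 : ℝ) ^ (1/p) ≤ (1/3 : ℝ) ^ (1/p) :=
      Real.rpow_le_rpow (by norm_num) (by norm_num) hu0.le
    have i2 : ((2-s)/8) ^ (1/q) ≤ (M/2) ^ (1/q) :=
      Real.rpow_le_rpow h2s hfrac hv0.le
    have step : (β-α)^2 * ((1/4 : ℝ) ^ (1/p) * (((2-s)/8) ^ (1/q) * (A+B) ^ (1/q)))
        ≤ (β-α)^2 * ((1/3 : ℝ) ^ (1/p) * ((M/2) ^ (1/q) * (|f' α| + |f' β|))) := by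
      apply mul_le_mul_of_nonneg_left _ (by positivity)
      apply mul_le_mul i1 _ (by positivity) (by positivity)
      apply mul_le_mul i2 hABle (by positivity) (by positivity)
    refine step.trans (le_of_eq ?_)
    have e1 : (1/3 : ℝ) ^ (1/p) = (2/3 : ℝ) ^ (1/p) * (1/2 : ℝ) ^ (1/p) := by
      rw [← Real.mul_rpow (by norm_num) (by norm_num)]
      norm_num
    have e2 : (M/2) ^ (1/q) = M ^ (1/q) * (1/2 : ℝ) ^ (1/q) := by
      rw [show M/2 = M * (1/2) by ring, Real.mul_rpow hM0.le (by norm_num)]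
    have e3 : (1/2 : ℝ) ^ (1/p) * (1/2 : ℝ) ^ (1/q) = 1/2 := by
      rw [← Real.rpow_add (by norm_num), huv, Real.rpow_one]
    rw [e1, e2]
    calc (β-α)^2 * ((2/3 : ℝ) ^ (1/p) * (1/2 : ℝ) ^ (1/p)
          * (M ^ (1/q) * (1/2 : ℝ) ^ (1/q) * (|f' α| + |f' β|)))
        = (2/3) ^ (1/p) * M ^ (1/q) * ((β - α)^2 * ((1/2 : ℝ) ^ (1/p) * (1/2 : ℝ) ^ (1/q)))
          * (|f' α| + |f' β|) := by ring
      _ = (2/3) ^ (1/p) * M ^ (1/q) * ((β - α)^2 / 2) * (|f' α| + |f' β|) := by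
          rw [e3]; ring
  rw [hIoc]
  exact main.trans final

theorem trapezoid_error_s_convex_power_mean (f f' : ℝ → ℝ) (a b s p q c d : ℝ) (n : ℕ)
    (x : ℕ → ℝ)
    (ha : 0 ≤ a) (hab : a < b) (hs : s ∈ Set.Ioc (0:ℝ) 1)
    (hq : 1 < q) (hp : p = q / (q - 1))
    (hc : c < a) (hd : b < d)
    (hdiff : ∀ y ∈ Set.Ioo c d, HasDerivAt f (f' y) y)
    (hint : IntervalIntegrable f' volume a b)
    (hconv : ∀ y ∈ Set.Icc a b, ∀ z ∈ Set.Icc a b, ∀ t ∈ Set.Icc (0:ℝ) 1,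
      |f' (t * y + (1 - t) * z)| ^ q ≤ t ^ s * |f' y| ^ q + (1 - t) ^ s * |f' z| ^ q)
    (hx0 : x 0 = a) (hxn : x n = b)
    (hxmono : ∀ k < n, x k < x (k + 1)) :
    |(∫ y in a..b, f y) -
        ∑ k ∈ Finset.range n, ((f (x k) + f (x (k + 1))) / 2) * (x (k + 1) - x k)| ≤
      (2 / 3) ^ (1 / p) *
        ((s ^ 2 + 3 * s + 4) / ((s + 1) * (s + 2) * (s + 3))) ^ (1 / q) *
        ∑ k ∈ Finset.range n,
          ((x (k + 1) - x k) ^ 2 / 2) * (|f' (x k)| + |f' (x (k + 1))|) := by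
  obtain ⟨hs0, hs1⟩ := hs
  have hpq : p.HolderConjugate q :=
    ((Real.holderConjugate_iff_eq_conjExponent hq).mpr hp).symm
  have hle : ∀ k l, k ≤ l → l ≤ n → x k ≤ x l := by
    intro k l hkl hln
    induction l with
    | zero =>
      have : k = 0 := Nat.le_zero.mp hkl
      simp [this]
    | succ l ih =>
      rcases Nat.lt_or_ge k (l+1) with h | h
      · have hk : k ≤ l := Nat.lt_succ_iff.mp h
        have h1 := ih hk (by omega)
        have h2 := (hxmono l (by omega)).le
        linarith
      · have : k = l + 1 := le_antisymm hkl h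
        simp [this]
  have hmem : ∀ k, k ≤ n → x k ∈ Set.Icc a b := fun k hk =>
    ⟨hx0 ▸ hle 0 k (Nat.zero_le _) hk, hxn ▸ hle k n hk le_rfl⟩
  have hsub : ∀ k < n, Set.Icc (x k) (x (k+1)) ⊆ Set.Icc a b := by
    intro k hk
    exact Set.Icc_subset_Icc (hmem k (by omega)).1 (hmem (k+1) (by omega)).2
  have hIccsub : Set.Icc a b ⊆ Set.Ioo c d := fun y hy =>
    ⟨lt_of_lt_of_le hc hy.1, lt_of_le_of_lt hy.2 hd⟩
  have hintk : ∀ k < n, IntervalIntegrable f' volume (x k) (x (k+1)) := by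
    intro k hk
    apply hint.mono_set
    rw [Set.uIcc_of_le (hxmono k hk).le, Set.uIcc_of_le hab.le]
    exact hsub k hk
  have hfc : ∀ k < n, IntervalIntegrable f volume (x k) (x (k+1)) := by
    intro k hk
    apply ContinuousOn.intervalIntegrable
    intro y hy
    rw [Set.uIcc_of_le (hxmono k hk).le] at hy
    exact ((hdiff y (hIccsub (hsub k hk hy))).continuousAt).continuousWithinAt
  have hsplit : ∫ y in a..b, f y = ∑ k ∈ Finset.range n, ∫ y in x k..x (k+1), f y := by
    rw [← hx0, ← hxn]
    exact (intervalIntegral.sum_integral_adjacent_intervals hfc).symm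
  rw [hsplit, ← Finset.sum_sub_distrib]
  set C : ℝ := (2 / 3) ^ (1 / p) *
    ((s ^ 2 + 3 * s + 4) / ((s + 1) * (s + 2) * (s + 3))) ^ (1 / q) with hC
  calc |∑ k ∈ Finset.range n,
        ((∫ y in x k..x (k+1), f y) - ((f (x k) + f (x (k + 1))) / 2) * (x (k + 1) - x k))|
      ≤ ∑ k ∈ Finset.range n,
        |(∫ y in x k..x (k+1), f y) - ((f (x k) + f (x (k + 1))) / 2) * (x (k + 1) - x k)| :=
      Finset.abs_sum_le_sum_abs _ _
    _ ≤ ∑ k ∈ Finset.range n,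
        C * (((x (k + 1) - x k) ^ 2 / 2) * (|f' (x k)| + |f' (x (k + 1))|)) := by
      apply Finset.sum_le_sum
      intro k hk
      have hk' := Finset.mem_range.mp hk
      have key := keyIneq f f' s p q (x k) (x (k+1)) hs0 hs1 hpq (hxmono k hk')
        (fun y hy => hdiff y (hIccsub (hsub k hk' hy)))
        (hintk k hk')
        (fun t ht => hconv (x k) (hmem k (by omega)) (x (k+1)) (hmem (k+1) (by omega)) t ht)
      refine key.trans (le_of_eq ?_)
      rw [hC]; ring
    _ = C * ∑ k ∈ Finset.range n,
        ((x (k + 1) - x k) ^ 2 / 2) * (|f' (x k)| + |f' (x (k + 1))|) :=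
      (Finset.mul_sum _ _ _).symm
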